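/- Let D ≥ 1, N ≥ 2, let x_1, …, x_N ∈ ℝ^D be pairwise distinct, let ε > 0, and let ρ > 0 be a real number with ‖x_i − x_j‖ ≤ ρ for all i, j. Then there exists a coupling λ of the mixture measure ν_ε and the empirical measure μ_X = (1/N)·Σ_{i=1}^N δ_{x_i} such that ∫_{ℝ^D × ℝ^D} ‖x − y‖² dλ(x,y) ≤ ρ²·(ε²·D + 1). -/

import Mathlib

open MeasureTheory Real ENNReal

/-- The Gaussian density on `ℝ^D` with center `x` and scale `σ`:
`g_{x,σ}(y) = (2πσ²)^{-D/2} · exp(−‖y−x‖²/(2σ²))`. -/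
noncomputable def gaussDensity (D : ℕ) (x : EuclideanSpace ℝ (Fin D)) (σ : ℝ)
    (y : EuclideanSpace ℝ (Fin D)) : ℝ :=
  (2 * Real.pi * σ ^ 2) ^ (-(D : ℝ) / 2) * Real.exp (-‖y - x‖ ^ 2 / (2 * σ ^ 2))

/-- `min_{j ≠ i} ‖x_i − x_j‖`, the distance from `x_i` to its nearest other point. -/
noncomputable def minDist {D N : ℕ} (hN : 2 ≤ N) (x : Fin N → EuclideanSpace ℝ (Fin D))
    (i : Fin N) : ℝ :=
  (Finset.univ.erase i).inf'
    (by
      rw [← Finset.card_pos, Finset.card_erase_of_mem (Finset.mem_univ i),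
        Finset.card_univ, Fintype.card_fin]
      omega)
    fun j => ‖x i - x j‖

/-- The adaptive bandwidth `σ_i(ε) = ε · ln(1 + min_{j ≠ i} ‖x_i − x_j‖)`. -/
noncomputable def sigmaEps {D N : ℕ} (hN : 2 ≤ N) (x : Fin N → EuclideanSpace ℝ (Fin D))
    (ε : ℝ) (i : Fin N) : ℝ :=
  ε * Real.log (1 + minDist hN x i)

/-- The mixture representation `f_{X,σ(ε)}(y) = (1/N)·Σ_i g_{x_i, σ_i(ε)}(y)`. -/
noncomputable def mixtureDensity {D N : ℕ} (hN : 2 ≤ N) (x : Fin N → EuclideanSpace ℝ (Fin D))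
    (ε : ℝ) (y : EuclideanSpace ℝ (Fin D)) : ℝ :=
  (1 / (N : ℝ)) * ∑ i, gaussDensity D (x i) (sigmaEps hN x ε i) y

/-- The measure `ν_ε` on `ℝ^D` with Lebesgue density `f_{X,σ(ε)}`. -/
noncomputable def mixtureMeasure {D N : ℕ} (hN : 2 ≤ N) (x : Fin N → EuclideanSpace ℝ (Fin D))
    (ε : ℝ) : Measure (EuclideanSpace ℝ (Fin D)) :=
  volume.withDensity fun y => ENNReal.ofReal (mixtureDensity hN x ε y)

/-- The empirical measure `μ_X = (1/N)·Σ_i δ_{x_i}`. -/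
noncomputable def empiricalMeasure {D N : ℕ} (x : Fin N → EuclideanSpace ℝ (Fin D)) :
    Measure (EuclideanSpace ℝ (Fin D)) :=
  ((N : ℝ≥0∞))⁻¹ • ∑ i, Measure.dirac (x i)

section Aux
open Set Filter


variable {D : ℕ}

theorem moment2_1d {b : ℝ} (hb : 0 < b) :
    ∫ t : ℝ, t ^ 2 * Real.exp (-b * t ^ 2) = (∫ t : ℝ, Real.exp (-b * t ^ 2)) / (2 * b) := by
  have h1 : ∫ t : ℝ, t ^ 2 * Real.exp (-b * t ^ 2)
      = 2 * ∫ t in Ioi (0:ℝ), t ^ 2 * Real.exp (-b * t ^ 2) := by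
    rw [← integral_comp_abs (f := fun t => t ^ 2 * Real.exp (-b * t ^ 2))]
    congr 1; ext t; rw [sq_abs]
  have key := integral_rpow_mul_exp_neg_mul_rpow (p := 2) (q := 2) (by norm_num) (by norm_num) hb
  have h2 : ∫ t in Ioi (0:ℝ), t ^ 2 * Real.exp (-b * t ^ 2)
      = b ^ (-((2:ℝ) + 1) / 2) * (1/2) * Real.Gamma (((2:ℝ) + 1) / 2) := by
    rw [← key]
    refine setIntegral_congr_fun measurableSet_Ioi (fun t ht => ?_)
    norm_cast
  have hG : Real.Gamma (((2:ℝ)+1)/2) = Real.sqrt π / 2 := by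
    rw [show ((2:ℝ)+1)/2 = 1/2 + 1 by norm_num, Real.Gamma_add_one (by norm_num),
      Real.Gamma_one_half_eq]
    ring
  rw [h1, h2, hG, integral_gaussian]
  rw [show (-((2:ℝ)+1)/2) = -1 + -(1/2) by norm_num, Real.rpow_add hb, Real.rpow_neg_one,
    Real.rpow_neg hb.le, ← Real.sqrt_eq_rpow, Real.sqrt_div pi_nonneg]
  have : Real.sqrt b ≠ 0 := by positivity
  field_simp


noncomputable def eqE (D : ℕ) := (MeasurableEquiv.toLp 2 (Fin D → ℝ)).symm

theorem eqE_mp : MeasurePreserving (eqE D).symm volume volume :=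
  MeasurePreserving.symm _ (EuclideanSpace.volume_preserving_symm_measurableEquiv_toLp (Fin D))

theorem eucl_transfer (f : EuclideanSpace ℝ (Fin D) → ℝ) :
    ∫ y : EuclideanSpace ℝ (Fin D), f y = ∫ x : Fin D → ℝ, f ((eqE D).symm x) :=
  (eqE_mp.integral_comp' f).symm

theorem eucl_integrable_iff (f : EuclideanSpace ℝ (Fin D) → ℝ) :
    Integrable f ↔ Integrable (fun x : Fin D → ℝ => f ((eqE D).symm x)) :=
  (eqE_mp.integrable_comp_emb (MeasurableEquiv.measurableEmbedding _)).symm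

theorem norm_sq_eucl (v : EuclideanSpace ℝ (Fin D)) : ‖v‖ ^ 2 = ∑ i, (v i) ^ 2 := by
  rw [EuclideanSpace.norm_eq, sq_sqrt (by positivity)]
  simp [Real.norm_eq_abs, sq_abs]

example (x : Fin D → ℝ) (i : Fin D) : ((eqE D).symm x) i = x i := rfl


theorem exp_prod_eucl {b : ℝ} (x : Fin D → ℝ) :
    Real.exp (-b * ‖(eqE D).symm x‖ ^ 2) = ∏ i, Real.exp (-b * (x i) ^ 2) := by
  rw [norm_sq_eucl, ← Real.exp_sum, Finset.mul_sum]
  rfl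

theorem hint2 {b : ℝ} (hb : 0 < b) :
    Integrable (fun t : ℝ => t ^ 2 * Real.exp (-b * t ^ 2)) := by
  simpa [neg_mul] using integrable_rpow_mul_exp_neg_mul_sq hb (s := 2) (by norm_num)

theorem integrable_gauss0 {b : ℝ} (hb : 0 < b) :
    Integrable (fun v : EuclideanSpace ℝ (Fin D) => Real.exp (-b * ‖v‖ ^ 2)) := by
  rw [eucl_integrable_iff]
  simp only [exp_prod_eucl]
  exact Integrable.fintype_prod (𝕜 := ℝ) fun i => integrable_exp_neg_mul_sq hb

theorem integral_gauss0 {b : ℝ} (hb : 0 < b) :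
    ∫ v : EuclideanSpace ℝ (Fin D), Real.exp (-b * ‖v‖ ^ 2)
      = (∫ t : ℝ, Real.exp (-b * t ^ 2)) ^ D := by
  rw [eucl_transfer]
  simp only [exp_prod_eucl]
  rw [MeasureTheory.integral_fintype_prod_volume_eq_pow (𝕜 := ℝ) (ι := Fin D)
    (f := fun t => Real.exp (-b * t ^ 2))]
  simp

theorem mom_prod_eucl {b : ℝ} (x : Fin D → ℝ) :
    ‖(eqE D).symm x‖ ^ 2 * Real.exp (-b * ‖(eqE D).symm x‖ ^ 2)
      = ∑ j, ∏ i, ((if i = j then (x i) ^ 2 else 1) * Real.exp (-b * (x i) ^ 2)) := by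
  have h1 : ∀ j : Fin D, ∏ i, ((if i = j then (x i) ^ 2 else 1) * Real.exp (-b * (x i) ^ 2))
      = (x j) ^ 2 * ∏ i, Real.exp (-b * (x i) ^ 2) := by
    intro j
    rw [Finset.prod_mul_distrib, Finset.prod_ite_eq' Finset.univ j (fun i => (x i) ^ 2)]
    simp
  simp only [h1]
  rw [exp_prod_eucl, ← Finset.sum_mul, norm_sq_eucl]
  rfl

theorem integrable_mom0 {b : ℝ} (hb : 0 < b) :
    Integrable (fun v : EuclideanSpace ℝ (Fin D) => ‖v‖ ^ 2 * Real.exp (-b * ‖v‖ ^ 2)) := by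
  rw [eucl_integrable_iff]
  simp only [mom_prod_eucl]
  apply integrable_finset_sum
  intro j _
  refine Integrable.fintype_prod (𝕜 := ℝ)
    (f := fun i t => (if i = j then t ^ 2 else 1) * Real.exp (-b * t ^ 2)) fun i => ?_
  by_cases h : i = j
  · simpa [h] using hint2 hb
  · simpa [h] using integrable_exp_neg_mul_sq hb

theorem integral_mom0 {b : ℝ} (hb : 0 < b) :
    ∫ v : EuclideanSpace ℝ (Fin D), ‖v‖ ^ 2 * Real.exp (-b * ‖v‖ ^ 2)
      = (D : ℝ) / (2 * b) * ∫ v : EuclideanSpace ℝ (Fin D), Real.exp (-b * ‖v‖ ^ 2) := by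
  rw [integral_gauss0 hb, eucl_transfer]
  simp only [mom_prod_eucl]
  have hInt : ∀ j ∈ Finset.univ, Integrable (fun x : Fin D → ℝ =>
      ∏ i, ((if i = j then (x i) ^ 2 else 1) * Real.exp (-b * (x i) ^ 2))) := by
    intro j _
    refine Integrable.fintype_prod (𝕜 := ℝ)
      (f := fun i t => (if i = j then t ^ 2 else 1) * Real.exp (-b * t ^ 2)) fun i => ?_
    by_cases h : i = j
    · simpa [h] using hint2 hb
    · simpa [h] using integrable_exp_neg_mul_sq hb
  rw [integral_finset_sum _ hInt]
  have hA : ∀ j : Fin D,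
      (∫ x : Fin D → ℝ, ∏ i, ((if i = j then (x i) ^ 2 else 1) * Real.exp (-b * (x i) ^ 2)))
      = ((∫ t : ℝ, Real.exp (-b * t ^ 2)) / (2 * b))
          * (∫ t : ℝ, Real.exp (-b * t ^ 2)) ^ (D - 1) := by
    intro j
    have herase : ∀ i ∈ Finset.univ.erase j,
        (∫ t : ℝ, (if i = j then t ^ 2 else 1) * Real.exp (-b * t ^ 2))
          = ∫ t : ℝ, Real.exp (-b * t ^ 2) := by
      intro i hi
      rw [show (fun t : ℝ => (if i = j then t ^ 2 else 1) * Real.exp (-b * t ^ 2))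
        = fun t : ℝ => Real.exp (-b * t ^ 2) by
          ext t; rw [if_neg (Finset.ne_of_mem_erase hi), one_mul]]
    rw [MeasureTheory.integral_fintype_prod_volume_eq_prod (𝕜 := ℝ) (ι := Fin D)
      (f := fun i t => (if i = j then t ^ 2 else 1) * Real.exp (-b * t ^ 2)),
      ← Finset.mul_prod_erase Finset.univ _ (Finset.mem_univ j)]
    simp only [eq_self_iff_true, if_true]
    rw [moment2_1d hb, Finset.prod_congr rfl herase, Finset.prod_const,
      Finset.card_erase_of_mem (Finset.mem_univ j), Finset.card_univ, Fintype.card_fin]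
  simp only [hA, Finset.sum_const, Finset.card_univ, Fintype.card_fin, nsmul_eq_mul]
  rcases Nat.eq_zero_or_pos D with hD | hD
  · subst hD; simp
  · have hp : (∫ t : ℝ, Real.exp (-b * t ^ 2)) * (∫ t : ℝ, Real.exp (-b * t ^ 2)) ^ (D - 1)
        = (∫ t : ℝ, Real.exp (-b * t ^ 2)) ^ D := by
      rw [← pow_succ' (∫ t : ℝ, Real.exp (-b * t ^ 2)) (D - 1), Nat.sub_add_cancel hD]
    rw [div_mul_eq_mul_div, hp]
    ring

variable {D : ℕ} {σ : ℝ} {c : EuclideanSpace ℝ (Fin D)}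

theorem gaussDensity_eq (hσ : 0 < σ) (y : EuclideanSpace ℝ (Fin D)) :
    gaussDensity D c σ y
      = (2 * Real.pi * σ ^ 2) ^ (-(D : ℝ) / 2)
        * Real.exp (-(2 * σ ^ 2)⁻¹ * ‖y - c‖ ^ 2) := by
  unfold gaussDensity
  congr 2
  field_simp

theorem hbpos (hσ : 0 < σ) : 0 < (2 * σ ^ 2)⁻¹ := by positivity

theorem KA_eq_one (hσ : 0 < σ) :
    (2 * Real.pi * σ ^ 2) ^ (-(D : ℝ) / 2)
      * (∫ t : ℝ, Real.exp (-(2 * σ ^ 2)⁻¹ * t ^ 2)) ^ D = 1 := by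
  have hz : (0:ℝ) < 2 * Real.pi * σ ^ 2 := by positivity
  rw [integral_gaussian, show Real.pi / (2 * σ ^ 2)⁻¹ = 2 * Real.pi * σ ^ 2 by
    field_simp]
  rw [Real.sqrt_eq_rpow, ← Real.rpow_natCast ((2 * Real.pi * σ ^ 2) ^ ((1:ℝ)/2)) D,
    ← Real.rpow_mul hz.le, ← Real.rpow_add hz]
  rw [show -(D : ℝ) / 2 + 1 / 2 * (D:ℝ) = 0 by ring, Real.rpow_zero]

theorem gauss_integrable (hσ : 0 < σ) : Integrable (gaussDensity D c σ) := by
  have h := ((integrable_gauss0 (D := D) (hbpos hσ)).comp_sub_right c).const_mul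
    ((2 * Real.pi * σ ^ 2) ^ (-(D : ℝ) / 2))
  refine h.congr (Filter.Eventually.of_forall fun y => ?_)
  rw [gaussDensity_eq hσ]

theorem gauss_integral (hσ : 0 < σ) : ∫ y, gaussDensity D c σ y = 1 := by
  simp only [gaussDensity_eq hσ]
  rw [integral_const_mul,
    integral_sub_right_eq_self (μ := volume)
      (fun v : EuclideanSpace ℝ (Fin D) => Real.exp (-(2 * σ ^ 2)⁻¹ * ‖v‖ ^ 2)) c,
    integral_gauss0 (hbpos hσ), KA_eq_one hσ]

theorem gauss_mom_integrable (hσ : 0 < σ) :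
    Integrable (fun y => ‖y - c‖ ^ 2 * gaussDensity D c σ y) := by
  have h := (((integrable_mom0 (D := D) (hbpos hσ)).comp_sub_right c).const_mul
    ((2 * Real.pi * σ ^ 2) ^ (-(D : ℝ) / 2)))
  refine h.congr (Filter.Eventually.of_forall fun y => ?_)
  simp only [gaussDensity_eq hσ]
  ring

theorem gauss_mom (hσ : 0 < σ) :
    ∫ y, ‖y - c‖ ^ 2 * gaussDensity D c σ y = σ ^ 2 * D := by
  simp only [gaussDensity_eq hσ]
  have : ∀ y : EuclideanSpace ℝ (Fin D), ‖y - c‖ ^ 2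
        * ((2 * Real.pi * σ ^ 2) ^ (-(D : ℝ) / 2)
          * Real.exp (-(2 * σ ^ 2)⁻¹ * ‖y - c‖ ^ 2))
      = (2 * Real.pi * σ ^ 2) ^ (-(D : ℝ) / 2)
        * (‖y - c‖ ^ 2 * Real.exp (-(2 * σ ^ 2)⁻¹ * ‖y - c‖ ^ 2)) := fun y => by ring
  simp only [this]
  rw [integral_const_mul,
    integral_sub_right_eq_self (μ := volume)
      (fun v : EuclideanSpace ℝ (Fin D) => ‖v‖ ^ 2 * Real.exp (-(2 * σ ^ 2)⁻¹ * ‖v‖ ^ 2)) c,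
    integral_mom0 (hbpos hσ), integral_gauss0 (hbpos hσ)]
  rw [← mul_assoc, mul_comm ((2 * Real.pi * σ ^ 2) ^ (-(D : ℝ) / 2)) _, mul_assoc,
    KA_eq_one hσ, mul_one]
  rw [show (D:ℝ) / (2 * (2 * σ ^ 2)⁻¹) = σ ^ 2 * D by field_simp]

theorem gaussDensity_nonneg {D : ℕ} (c : EuclideanSpace ℝ (Fin D)) (σ : ℝ)
    (y : EuclideanSpace ℝ (Fin D)) : 0 ≤ gaussDensity D c σ y := by
  unfold gaussDensity; positivity

theorem gaussDensity_measurable {D : ℕ} (c : EuclideanSpace ℝ (Fin D)) (σ : ℝ) :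
    Measurable (gaussDensity D c σ) := by
  unfold gaussDensity
  fun_prop



theorem withDensity_finset_sum' {α : Type*} [MeasurableSpace α] (μ : Measure α) {ι : Type*}
    (s : Finset ι) (f : ι → α → ℝ≥0∞) (hf : ∀ i, Measurable (f i)) :
    μ.withDensity (fun y => ∑ i ∈ s, f i y) = ∑ i ∈ s, μ.withDensity (f i) := by
  classical
  induction s using Finset.induction with
  | empty => simp
  | @insert a s hnot ih =>
    rw [Finset.sum_insert hnot,
      show (fun y => ∑ i ∈ insert a s, f i y)
        = f a + fun y => ∑ i ∈ s, f i y by ext y; simp [Finset.sum_insert hnot],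
      withDensity_add_left (hf a), ih]

theorem map_finset_sum' {α β : Type*} [MeasurableSpace α] [MeasurableSpace β] {ι : Type*}
    (s : Finset ι) (μ : ι → Measure α) {f : α → β} (hf : Measurable f) :
    (∑ i ∈ s, μ i).map f = ∑ i ∈ s, (μ i).map f := by
  classical
  induction s using Finset.induction with
  | empty => simp
  | @insert a s hnot ih =>
    rw [Finset.sum_insert hnot, Finset.sum_insert hnot, Measure.map_add _ _ hf, ih]


end Aux

/-- if `ρ > 0` bounds all pairwise distances, there is a coupling of the
mixture measure `ν_ε` and the empirical measure `μ_X` with quadratic transport cost at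
most `ρ²·(ε²·D + 1)`. -/
theorem exists_coupling_cost_le_rho {D N : ℕ} (hD : 1 ≤ D) (hN : 2 ≤ N)
    (x : Fin N → EuclideanSpace ℝ (Fin D)) (hx : Function.Injective x)
    (ε : ℝ) (hε : 0 < ε) (ρ : ℝ) (hρpos : 0 < ρ) (hρ : ∀ i j, ‖x i - x j‖ ≤ ρ) :
    ∃ lam : Measure (EuclideanSpace ℝ (Fin D) × EuclideanSpace ℝ (Fin D)),
      IsProbabilityMeasure lam ∧
      lam.map Prod.fst = mixtureMeasure hN x ε ∧
      lam.map Prod.snd = empiricalMeasure x ∧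
      ∫⁻ p, ENNReal.ofReal (‖p.1 - p.2‖ ^ 2) ∂lam ≤
        ENNReal.ofReal (ρ ^ 2 * (ε ^ 2 * (D : ℝ) + 1)) := by
  have hNpos : (0:ℝ) < N := by positivity
  -- bandwidth positivity and bound
  have hmpos : ∀ i, 0 < minDist hN x i := by
    intro i
    rw [minDist, Finset.lt_inf'_iff]
    intro j hj
    have : x i ≠ x j := fun h => (Finset.ne_of_mem_erase hj) (hx h).symm
    simpa [sub_eq_zero] using this
  have hmle : ∀ i, minDist hN x i ≤ ρ := by
    intro i
    obtain ⟨j, hj⟩ : (Finset.univ.erase i).Nonempty := by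
      rw [← Finset.card_pos, Finset.card_erase_of_mem (Finset.mem_univ i),
        Finset.card_univ, Fintype.card_fin]
      omega
    exact le_trans (Finset.inf'_le _ hj) (hρ i j)
  have hσpos : ∀ i, 0 < sigmaEps hN x ε i := by
    intro i
    exact mul_pos hε (Real.log_pos (by linarith [hmpos i]))
  have hσle : ∀ i, sigmaEps hN x ε i ≤ ε * ρ := by
    intro i
    refine mul_le_mul_of_nonneg_left ?_ hε.le
    calc Real.log (1 + minDist hN x i) ≤ (1 + minDist hN x i) - 1 :=
          Real.log_le_sub_one_of_pos (by linarith [hmpos i])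
      _ = minDist hN x i := by ring
      _ ≤ ρ := hmle i
  -- the component Gaussian measures
  set ν : Fin N → Measure (EuclideanSpace ℝ (Fin D)) := fun i =>
    volume.withDensity fun y => ENNReal.ofReal (gaussDensity D (x i) (sigmaEps hN x ε i) y)
    with hν
  have hν_univ : ∀ i, ν i Set.univ = 1 := by
    intro i
    rw [hν]
    simp only [withDensity_apply _ MeasurableSet.univ, Measure.restrict_univ]
    rw [← ofReal_integral_eq_lintegral_ofReal (gauss_integrable (hσpos i))
      (Filter.Eventually.of_forall (gaussDensity_nonneg _ _)), gauss_integral (hσpos i)]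
    simp
  have hν_prob : ∀ i, IsProbabilityMeasure (ν i) := fun i => ⟨hν_univ i⟩
  -- the coupling
  set lam : Measure (EuclideanSpace ℝ (Fin D) × EuclideanSpace ℝ (Fin D)) :=
    (N : ℝ≥0∞)⁻¹ • ∑ i, (ν i).map (fun y => (y, x i)) with hlam
  have hmeas_pair : ∀ i : Fin N,
      Measurable (fun y : EuclideanSpace ℝ (Fin D) => (y, x i)) := fun i =>
    measurable_id.prodMk measurable_const
  refine ⟨lam, ?_, ?_, ?_, ?_⟩
  · -- probability measure
    constructor
    rw [hlam]
    simp only [Measure.smul_apply, Measure.coe_finset_sum, Finset.sum_apply, smul_eq_mul]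
    have : ∀ i : Fin N, ((ν i).map (fun y => (y, x i))) Set.univ = 1 := by
      intro i
      rw [Measure.map_apply (hmeas_pair i) MeasurableSet.univ]
      simpa using hν_univ i
    rw [Finset.sum_congr rfl fun i _ => this i]
    simp only [Finset.sum_const, Finset.card_univ, Fintype.card_fin, nsmul_eq_mul, mul_one]
    rw [ENNReal.inv_mul_cancel (by simp; omega) (by simp)]
  · -- first marginal
    have hgmeas : ∀ i : Fin N, Measurable (fun y =>
        ENNReal.ofReal (gaussDensity D (x i) (sigmaEps hN x ε i) y)) := fun i =>
      (gaussDensity_measurable _ _).ennreal_ofReal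
    have hmix : mixtureMeasure hN x ε = (N : ℝ≥0∞)⁻¹ • ∑ i, ν i := by
      rw [mixtureMeasure]
      have hd : (fun y => ENNReal.ofReal (mixtureDensity hN x ε y))
          = (N : ℝ≥0∞)⁻¹ • fun y =>
              ∑ i, ENNReal.ofReal (gaussDensity D (x i) (sigmaEps hN x ε i) y) := by
        ext y
        simp only [Pi.smul_apply, smul_eq_mul]
        rw [mixtureDensity, ENNReal.ofReal_mul (by positivity),
          ENNReal.ofReal_sum_of_nonneg (fun i _ => gaussDensity_nonneg _ _ _)]
        congr 1
        rw [one_div, ENNReal.ofReal_inv_of_pos hNpos, ENNReal.ofReal_natCast]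
      rw [hd, withDensity_smul _ (Finset.measurable_sum _ fun i _ => hgmeas i),
        withDensity_finset_sum' _ _ _ hgmeas]
    rw [hmix, hlam, Measure.map_smul, map_finset_sum' _ _ measurable_fst]
    congr 1
    refine Finset.sum_congr rfl fun i _ => ?_
    rw [Measure.map_map measurable_fst (hmeas_pair i)]
    exact Measure.map_id
  · -- second marginal
    rw [hlam, empiricalMeasure, Measure.map_smul, map_finset_sum' _ _ measurable_snd]
    congr 1
    refine Finset.sum_congr rfl fun i _ => ?_
    rw [Measure.map_map measurable_snd (hmeas_pair i)]
    show (ν i).map (fun _ => x i) = _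
    rw [Measure.map_const, hν_univ i, one_smul]
  · -- cost bound
    have hcost_meas : Measurable (fun p : EuclideanSpace ℝ (Fin D) × EuclideanSpace ℝ (Fin D) =>
        ENNReal.ofReal (‖p.1 - p.2‖ ^ 2)) := by fun_prop
    rw [hlam, lintegral_smul_measure, lintegral_finset_sum_measure]
    have hterm : ∀ i : Fin N,
        ∫⁻ p, ENNReal.ofReal (‖p.1 - p.2‖ ^ 2) ∂((ν i).map (fun y => (y, x i)))
          ≤ ENNReal.ofReal (ρ ^ 2 * (ε ^ 2 * (D : ℝ))) := by
      intro i
      rw [lintegral_map hcost_meas (hmeas_pair i), hν]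
      rw [lintegral_withDensity_eq_lintegral_mul _
        ((gaussDensity_measurable _ _).ennreal_ofReal) (by fun_prop)]
      have heq : ∀ y, (fun y => ENNReal.ofReal (gaussDensity D (x i) (sigmaEps hN x ε i) y)) y
            * ENNReal.ofReal (‖y - x i‖ ^ 2)
          = ENNReal.ofReal (‖y - x i‖ ^ 2 * gaussDensity D (x i) (sigmaEps hN x ε i) y) := by
        intro y
        rw [← ENNReal.ofReal_mul (gaussDensity_nonneg _ _ _)]
        ring_nf
      calc ∫⁻ y, (fun y => ENNReal.ofReal (gaussDensity D (x i) (sigmaEps hN x ε i) y)) y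
            * ENNReal.ofReal (‖y - x i‖ ^ 2)
          = ∫⁻ y, ENNReal.ofReal
              (‖y - x i‖ ^ 2 * gaussDensity D (x i) (sigmaEps hN x ε i) y) := by
            exact lintegral_congr heq
        _ = ENNReal.ofReal (∫ y, ‖y - x i‖ ^ 2 * gaussDensity D (x i) (sigmaEps hN x ε i) y) :=
            (ofReal_integral_eq_lintegral_ofReal (gauss_mom_integrable (hσpos i))
              (Filter.Eventually.of_forall fun y =>
                mul_nonneg (by positivity) (gaussDensity_nonneg _ _ _))).symm
        _ = ENNReal.ofReal ((sigmaEps hN x ε i) ^ 2 * D) := by rw [gauss_mom (hσpos i)]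
        _ ≤ ENNReal.ofReal (ρ ^ 2 * (ε ^ 2 * (D : ℝ))) := by
            apply ENNReal.ofReal_le_ofReal
            have h1 : (sigmaEps hN x ε i) ^ 2 ≤ (ε * ρ) ^ 2 :=
              pow_le_pow_left₀ (hσpos i).le (hσle i) 2
            calc (sigmaEps hN x ε i) ^ 2 * (D:ℝ) ≤ (ε * ρ) ^ 2 * D := by
                  apply mul_le_mul_of_nonneg_right h1 (by positivity)
              _ = ρ ^ 2 * (ε ^ 2 * (D : ℝ)) := by ring
    calc (N : ℝ≥0∞)⁻¹ * ∑ i, ∫⁻ p, ENNReal.ofReal (‖p.1 - p.2‖ ^ 2)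
            ∂((ν i).map (fun y => (y, x i)))
        ≤ (N : ℝ≥0∞)⁻¹ * ∑ _i : Fin N, ENNReal.ofReal (ρ ^ 2 * (ε ^ 2 * (D : ℝ))) := by
          exact mul_le_mul_right (Finset.sum_le_sum fun i _ => hterm i) _
      _ = ENNReal.ofReal (ρ ^ 2 * (ε ^ 2 * (D : ℝ))) := by
          rw [Finset.sum_const, Finset.card_univ, Fintype.card_fin, nsmul_eq_mul, ← mul_assoc,
            ENNReal.inv_mul_cancel (by simp; omega) (by simp), one_mul]
      _ ≤ ENNReal.ofReal (ρ ^ 2 * (ε ^ 2 * (D : ℝ) + 1)) := by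
          apply ENNReal.ofReal_le_ofReal
          nlinarith [sq_nonneg ρ]
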